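/- Let k ≥ 0 and r > k. For every partition a = x_1 < x_2 < … < x_N = b and every v ∈ S_h, the interior component v^0 (the piecewise polynomial equal to v^0_i on I_i) satisfies the weak embedding inequality ‖v^0‖_{L²(a,b)} ≤ ((b − a) + h) ‖d_{w,r}v‖_h. -/

import Mathlib

open MeasureTheory Set

noncomputable section

/-- `p` is the discrete weak derivative of order `r` of the weak function
`(v0, vl, vr)` on the interval `(c, d)`: it is a polynomial of degree at most `r`
satisfying `∫ p q = -∫ v0 q' + vr q(d) - vl q(c)` for all polynomials `q` of
degree at most `r`. -/
def IsWeakDeriv (r : ℕ) (c d : ℝ) (v0 : ℝ → ℝ) (vl vr : ℝ) (p : Polynomial ℝ) : Prop :=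
  p.degree ≤ (r : WithBot ℕ) ∧ ∀ q : Polynomial ℝ, q.degree ≤ (r : WithBot ℕ) →
    (∫ t in c..d, p.eval t * q.eval t) =
      -(∫ t in c..d, v0 t * q.derivative.eval t) + vr * q.eval d - vl * q.eval c

/-- `p` is the L²(c,d)-orthogonal projection of `g` onto polynomials of degree at most `l`. -/
def IsL2Proj (l : ℕ) (c d : ℝ) (g : ℝ → ℝ) (p : Polynomial ℝ) : Prop :=
  p.degree ≤ (l : WithBot ℕ) ∧ ∀ q : Polynomial ℝ, q.degree ≤ (l : WithBot ℕ) →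
    (∫ t in c..d, (g t - p.eval t) * q.eval t) = 0

/-- `x 0 = a < x 1 < ⋯ < x (N-1) = b` is a partition of `(a,b)`. -/
def IsPartition (N : ℕ) (a b : ℝ) (x : ℕ → ℝ) : Prop :=
  2 ≤ N ∧ x 0 = a ∧ x (N - 1) = b ∧ ∀ i < N - 1, x i < x (i + 1)

/-- Membership in the weak finite element space `S_h`: on each of the `N - 1` elements the
interior component is a polynomial of degree at most `k`, the nodal values are single
valued, and the nodal value at the left endpoint vanishes. -/
def MemSh (k N : ℕ) (v0 : ℕ → Polynomial ℝ) (vn : ℕ → ℝ) : Prop :=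
  (∀ i < N - 1, (v0 i).degree ≤ (k : WithBot ℕ)) ∧ vn 0 = 0

/-- `D i` is the discrete weak derivative of order `r` of the weak finite element function
`(v0, vn)` on the `i`-th element `(x i, x (i+1))`. -/
def IsWeakDerivFam (r N : ℕ) (x : ℕ → ℝ) (v0 : ℕ → Polynomial ℝ) (vn : ℕ → ℝ)
    (D : ℕ → Polynomial ℝ) : Prop :=
  ∀ i < N - 1, IsWeakDeriv r (x i) (x (i + 1)) (fun t => (v0 i).eval t) (vn i) (vn (i + 1)) (D i)

/-- `(u0, un)` with discrete weak derivatives `Du` is a weak finite element solution: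
it belongs to `S_h` and satisfies
`(a2 d_w u_h, d_w v)_h + (a0 u_h⁰, v⁰) = (f, v⁰)` for all `v ∈ S_h`. -/
def IsWFESol (k r N : ℕ) (x : ℕ → ℝ) (a2 a0 f : ℝ → ℝ)
    (u0 : ℕ → Polynomial ℝ) (un : ℕ → ℝ) (Du : ℕ → Polynomial ℝ) : Prop :=
  MemSh k N u0 un ∧ IsWeakDerivFam r N x u0 un Du ∧
  ∀ (v0 : ℕ → Polynomial ℝ) (vn : ℕ → ℝ) (Dv : ℕ → Polynomial ℝ),
    MemSh k N v0 vn → IsWeakDerivFam r N x v0 vn Dv →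
    ((∑ i ∈ Finset.range (N - 1), ∫ t in x i..x (i + 1), a2 t * (Du i).eval t * (Dv i).eval t)
      + ∑ i ∈ Finset.range (N - 1), ∫ t in x i..x (i + 1), a0 t * (u0 i).eval t * (v0 i).eval t)
      = ∑ i ∈ Finset.range (N - 1), ∫ t in x i..x (i + 1), f t * (v0 i).eval t

namespace WeakEmbedAux

open Polynomial

/-- Cauchy–Schwarz for interval integrals of continuous functions. -/
lemma integral_cs {c d : ℝ} (hcd : c ≤ d) {f g : ℝ → ℝ} (hf : Continuous f) (hg : Continuous g) :
    (∫ t in c..d, f t * g t) ^ 2 ≤ (∫ t in c..d, f t ^ 2) * ∫ t in c..d, g t ^ 2 := by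
  set A := ∫ t in c..d, f t ^ 2 with hA
  set B := ∫ t in c..d, f t * g t with hB
  set Cg := ∫ t in c..d, g t ^ 2 with hCg
  have key : ∀ s : ℝ, 0 ≤ Cg * (s * s) + (2 * B) * s + A := by
    intro s
    have h0 : 0 ≤ ∫ t in c..d, (f t + s * g t) ^ 2 :=
      intervalIntegral.integral_nonneg hcd (fun t _ => sq_nonneg _)
    have h1 : IntervalIntegrable (fun t => f t ^ 2) volume c d :=
      (hf.pow 2).intervalIntegrable c d
    have h2 : IntervalIntegrable (fun t => (2 * s) * (f t * g t)) volume c d :=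
      (continuous_const.mul (hf.mul hg)).intervalIntegrable c d
    have h3 : IntervalIntegrable (fun t => (s * s) * g t ^ 2) volume c d :=
      (continuous_const.mul (hg.pow 2)).intervalIntegrable c d
    have hcong : (∫ t in c..d, (f t + s * g t) ^ 2)
        = ∫ t in c..d, (f t ^ 2 + ((2 * s) * (f t * g t) + (s * s) * g t ^ 2)) := by
      apply intervalIntegral.integral_congr
      intro t _; ring
    rw [hcong, intervalIntegral.integral_add h1 (h2.add h3), intervalIntegral.integral_add h2 h3,
        intervalIntegral.integral_const_mul, intervalIntegral.integral_const_mul] at h0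
    nlinarith [h0]
  have hd := discrim_le_zero key
  rw [discrim] at hd
  nlinarith [hd]

lemma abs_integral_le {c d : ℝ} (hcd : c ≤ d) {f g : ℝ → ℝ} (hf : Continuous f)
    (hg : Continuous g) :
    |∫ t in c..d, f t * g t| ≤
      Real.sqrt (∫ t in c..d, f t ^ 2) * Real.sqrt (∫ t in c..d, g t ^ 2) := by
  have h2 := integral_cs hcd hf hg
  have hAnn : 0 ≤ ∫ t in c..d, f t ^ 2 :=
    intervalIntegral.integral_nonneg hcd (fun t _ => sq_nonneg _)
  calc |∫ t in c..d, f t * g t| = Real.sqrt ((∫ t in c..d, f t * g t) ^ 2) :=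
        (Real.sqrt_sq_eq_abs _).symm
    _ ≤ Real.sqrt ((∫ t in c..d, f t ^ 2) * ∫ t in c..d, g t ^ 2) := Real.sqrt_le_sqrt h2
    _ = _ := Real.sqrt_mul hAnn _

/-- Polynomial antiderivative. -/
def pint (p : ℝ[X]) : ℝ[X] := p.sum fun n a => C (a / (n + 1)) * X ^ (n + 1)

lemma derivative_pint (p : ℝ[X]) : derivative (pint p) = p := by
  conv_rhs => rw [← p.sum_C_mul_X_pow_eq]
  unfold pint
  rw [Polynomial.sum, map_sum, Polynomial.sum]
  refine Finset.sum_congr rfl fun n _ => ?_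
  rw [derivative_C_mul_X_pow]
  simp only [Nat.add_sub_cancel]
  congr 1
  have hne : ((n : ℝ) + 1) ≠ 0 := by positivity
  congr 1
  push_cast
  field_simp

lemma degree_pint_le (p : ℝ[X]) : (pint p).degree ≤ p.degree + 1 := by
  unfold pint
  rw [Polynomial.sum]
  refine (degree_sum_le _ _).trans (Finset.sup_le fun n hn => ?_)
  refine (degree_C_mul_X_pow_le _ _).trans ?_
  have h1 : (n : WithBot ℕ) ≤ p.degree := le_degree_of_ne_zero (Polynomial.mem_support_iff.mp hn)
  calc ((n + 1 : ℕ) : WithBot ℕ) = (n : WithBot ℕ) + 1 := by push_cast; rfl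
    _ ≤ p.degree + 1 := add_le_add_left h1 1

lemma poly_ftc (q : ℝ[X]) (c d : ℝ) :
    (∫ t in c..d, q.derivative.eval t) = q.eval d - q.eval c :=
  intervalIntegral.integral_eq_sub_of_hasDerivAt (fun t _ => q.hasDerivAt t)
    ((q.derivative.continuous).intervalIntegrable c d)

/-- Discrete Cauchy–Schwarz with square roots. -/
lemma sum_sqrt_cs {n : ℕ} {f g : ℕ → ℝ} (hf : ∀ i ∈ Finset.range n, 0 ≤ f i)
    (hg : ∀ i ∈ Finset.range n, 0 ≤ g i) :
    (∑ i ∈ Finset.range n, Real.sqrt (f i) * Real.sqrt (g i)) ≤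
      Real.sqrt (∑ i ∈ Finset.range n, f i) * Real.sqrt (∑ i ∈ Finset.range n, g i) := by
  have h := Finset.sum_mul_sq_le_sq_mul_sq (Finset.range n)
    (fun i => Real.sqrt (f i)) (fun i => Real.sqrt (g i))
  have h1 : (∑ i ∈ Finset.range n, Real.sqrt (f i) ^ 2) = ∑ i ∈ Finset.range n, f i :=
    Finset.sum_congr rfl fun i hi => Real.sq_sqrt (hf i hi)
  have h2 : (∑ i ∈ Finset.range n, Real.sqrt (g i) ^ 2) = ∑ i ∈ Finset.range n, g i :=
    Finset.sum_congr rfl fun i hi => Real.sq_sqrt (hg i hi)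
  rw [h1, h2] at h
  have hnn : 0 ≤ ∑ i ∈ Finset.range n, Real.sqrt (f i) * Real.sqrt (g i) :=
    Finset.sum_nonneg fun i _ => mul_nonneg (Real.sqrt_nonneg _) (Real.sqrt_nonneg _)
  calc (∑ i ∈ Finset.range n, Real.sqrt (f i) * Real.sqrt (g i))
      = Real.sqrt ((∑ i ∈ Finset.range n, Real.sqrt (f i) * Real.sqrt (g i)) ^ 2) :=
        (Real.sqrt_sq hnn).symm
    _ ≤ Real.sqrt ((∑ i ∈ Finset.range n, f i) * ∑ i ∈ Finset.range n, g i) :=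
        Real.sqrt_le_sqrt h
    _ = _ := Real.sqrt_mul (Finset.sum_nonneg hf) _

/-- Per-element estimate. -/
lemma elem_est {r k : ℕ} (hkr : k < r) {c d : ℝ} (hcd : c ≤ d) (P Di : ℝ[X])
    (hP : P.degree ≤ (k : WithBot ℕ)) (vl vr V : ℝ)
    (hwd : IsWeakDeriv r c d (fun t => P.eval t) vl vr Di) (hV : |vr| ≤ V) :
    (∫ t in c..d, (P.eval t) ^ 2) ≤
      (d - c) * (Real.sqrt (∫ t in c..d, (Di.eval t) ^ 2) *
        Real.sqrt (∫ t in c..d, (P.eval t) ^ 2))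
      + V * (Real.sqrt (d - c) * Real.sqrt (∫ t in c..d, (P.eval t) ^ 2)) := by
  set Si := ∫ t in c..d, (P.eval t) ^ 2 with hSi
  set Ti := ∫ t in c..d, (Di.eval t) ^ 2 with hTi
  have hSnn : 0 ≤ Si := by
    rw [hSi]; exact intervalIntegral.integral_nonneg hcd fun t _ => sq_nonneg _
  have hTnn : 0 ≤ Ti := by
    rw [hTi]; exact intervalIntegral.integral_nonneg hcd fun t _ => sq_nonneg _
  have hVnn : 0 ≤ V := le_trans (abs_nonneg _) hV
  set q : ℝ[X] := pint P - C ((pint P).eval c) with hq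
  have hq' : derivative q = P := by
    rw [hq, derivative_sub, derivative_C, derivative_pint, sub_zero]
  have hqc : q.eval c = 0 := by simp [hq]
  have hqdeg : q.degree ≤ (r : WithBot ℕ) := by
    have h3 : (pint P).degree ≤ (r : WithBot ℕ) := by
      refine (degree_pint_le P).trans ?_
      have h4 : P.degree + 1 ≤ (k : WithBot ℕ) + 1 := add_le_add_left hP 1
      refine h4.trans ?_
      have h5 : ((k : WithBot ℕ) + 1) = ((k + 1 : ℕ) : WithBot ℕ) := by push_cast; rfl
      rw [h5]
      exact_mod_cast hkr
    refine (Polynomial.degree_sub_le _ _).trans (max_le h3 (Polynomial.degree_C_le.trans ?_))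
    exact_mod_cast Nat.zero_le r
  have hmain := hwd.2 q hqdeg
  rw [hq'] at hmain
  simp only [hqc, mul_zero, sub_zero] at hmain
  have hPP : (∫ t in c..d, (fun t => P.eval t) t * P.eval t) = Si := by
    rw [hSi]
    apply intervalIntegral.integral_congr
    intro t _
    exact (pow_two (P.eval t)).symm
  rw [hPP] at hmain
  -- hmain : ∫ Di q = -Si + vr * q.eval d
  have hqt : ∀ t ∈ Set.Icc c d, (q.eval t) ^ 2 ≤ (d - c) * Si := by
    intro t ht
    have hct : c ≤ t := ht.1
    have htd : t ≤ d := ht.2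
    have hftc : q.eval t = ∫ s in c..t, P.eval s := by
      have hf := poly_ftc q c t
      rw [hq', hqc, sub_zero] at hf
      exact hf.symm
    have hcs := integral_cs hct (f := fun s => P.eval s) (g := fun _ => (1 : ℝ))
      P.continuous continuous_const
    have h1 : (∫ s in c..t, (1 : ℝ) ^ 2) = t - c := by simp
    rw [h1] at hcs
    simp only [mul_one] at hcs
    have hmono : (∫ s in c..t, P.eval s ^ 2) ≤ Si := by
      rw [hSi]
      apply intervalIntegral.integral_mono_interval le_rfl hct htd
      · exact Filter.Eventually.of_forall fun s => sq_nonneg _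
      · exact (P.continuous.pow 2).intervalIntegrable c d
    have hPnn : 0 ≤ ∫ s in c..t, P.eval s ^ 2 :=
      intervalIntegral.integral_nonneg hct fun s _ => sq_nonneg _
    rw [hftc]
    have e1 : (∫ s in c..t, P.eval s ^ 2) * (t - c) ≤ Si * (t - c) :=
      mul_le_mul_of_nonneg_right hmono (by linarith)
    have e2 : Si * (t - c) ≤ Si * (d - c) := mul_le_mul_of_nonneg_left (by linarith) hSnn
    have e3 : Si * (d - c) = (d - c) * Si := mul_comm _ _
    linarith [hcs, e1, e2, e3]
  have hqd2 : |q.eval d| ≤ Real.sqrt (d - c) * Real.sqrt Si := by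
    have hb := hqt d ⟨hcd, le_rfl⟩
    calc |q.eval d| = Real.sqrt ((q.eval d) ^ 2) := (Real.sqrt_sq_eq_abs _).symm
      _ ≤ Real.sqrt ((d - c) * Si) := Real.sqrt_le_sqrt hb
      _ = _ := Real.sqrt_mul (by linarith) _
  have hq2int : (∫ t in c..d, (q.eval t) ^ 2) ≤ (d - c) * ((d - c) * Si) := by
    have hconst : (∫ t in c..d, ((d - c) * Si)) = (d - c) * ((d - c) * Si) := by
      rw [intervalIntegral.integral_const]; simp [smul_eq_mul]
    calc (∫ t in c..d, (q.eval t) ^ 2) ≤ ∫ t in c..d, ((d - c) * Si) :=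
        intervalIntegral.integral_mono_on hcd ((q.continuous.pow 2).intervalIntegrable c d)
          intervalIntegrable_const hqt
      _ = _ := hconst
  have hDq : |∫ t in c..d, Di.eval t * q.eval t| ≤ Real.sqrt Ti * ((d - c) * Real.sqrt Si) := by
    have habs := abs_integral_le hcd (f := fun t => Di.eval t) (g := fun t => q.eval t)
      Di.continuous q.continuous
    rw [← hTi] at habs
    have hsq : Real.sqrt (∫ t in c..d, q.eval t ^ 2) ≤ (d - c) * Real.sqrt Si := by
      calc Real.sqrt (∫ t in c..d, q.eval t ^ 2) ≤ Real.sqrt ((d - c) * ((d - c) * Si)) :=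
            Real.sqrt_le_sqrt hq2int
        _ = Real.sqrt ((d - c) ^ 2 * Si) := by
            rw [show (d - c) * ((d - c) * Si) = (d - c) ^ 2 * Si from by ring]
        _ = Real.sqrt ((d - c) ^ 2) * Real.sqrt Si := Real.sqrt_mul (sq_nonneg _) _
        _ = (d - c) * Real.sqrt Si := by rw [Real.sqrt_sq (by linarith)]
    calc |∫ t in c..d, Di.eval t * q.eval t|
        ≤ Real.sqrt Ti * Real.sqrt (∫ t in c..d, q.eval t ^ 2) := habs
      _ ≤ Real.sqrt Ti * ((d - c) * Real.sqrt Si) :=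
          mul_le_mul_of_nonneg_left hsq (Real.sqrt_nonneg _)
  have hfin : Si ≤ |vr| * |q.eval d| + |∫ t in c..d, Di.eval t * q.eval t| := by
    have h1 : Si = vr * q.eval d - ∫ t in c..d, Di.eval t * q.eval t := by linarith [hmain]
    rw [h1]
    calc vr * q.eval d - (∫ t in c..d, Di.eval t * q.eval t)
        ≤ |vr * q.eval d| + |∫ t in c..d, Di.eval t * q.eval t| := by
          have h2 := le_abs_self (vr * q.eval d)
          have h3 := neg_abs_le (∫ t in c..d, Di.eval t * q.eval t)
          linarith
      _ = |vr| * |q.eval d| + |∫ t in c..d, Di.eval t * q.eval t| := by rw [abs_mul]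
  calc Si ≤ |vr| * |q.eval d| + |∫ t in c..d, Di.eval t * q.eval t| := hfin
    _ ≤ V * (Real.sqrt (d - c) * Real.sqrt Si) + Real.sqrt Ti * ((d - c) * Real.sqrt Si) :=
        add_le_add (mul_le_mul hV hqd2 (abs_nonneg _) hVnn) hDq
    _ = (d - c) * (Real.sqrt Ti * Real.sqrt Si) + V * (Real.sqrt (d - c) * Real.sqrt Si) := by ring

lemma assemble (n : ℕ) (h ba : ℝ) (S T H : ℕ → ℝ) (hh : 0 ≤ h) (hba : 0 ≤ ba)
    (hSnn : ∀ i ∈ Finset.range n, 0 ≤ S i) (hTnn : ∀ i ∈ Finset.range n, 0 ≤ T i)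
    (hHnn : ∀ i ∈ Finset.range n, 0 ≤ H i)
    (hsumH : (∑ i ∈ Finset.range n, H i) = ba)
    (helem : ∀ i ∈ Finset.range n, S i ≤ h * (Real.sqrt (T i) * Real.sqrt (S i)) +
      (Real.sqrt ba * Real.sqrt (∑ j ∈ Finset.range n, T j)) *
        (Real.sqrt (H i) * Real.sqrt (S i))) :
    Real.sqrt (∑ i ∈ Finset.range n, S i) ≤ (ba + h) * Real.sqrt (∑ i ∈ Finset.range n, T i) := by
  set Ss := ∑ i ∈ Finset.range n, S i with hSs
  set Ts := ∑ i ∈ Finset.range n, T i with hTs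
  have hSsnn : 0 ≤ Ss := Finset.sum_nonneg hSnn
  have hTsnn : 0 ≤ Ts := Finset.sum_nonneg hTnn
  have key : Ss ≤ (ba + h) * (Real.sqrt Ts * Real.sqrt Ss) := by
    have c1 : (∑ i ∈ Finset.range n, Real.sqrt (T i) * Real.sqrt (S i)) ≤
        Real.sqrt Ts * Real.sqrt Ss := by
      rw [hTs, hSs]; exact sum_sqrt_cs hTnn hSnn
    have c2 : (∑ i ∈ Finset.range n, Real.sqrt (H i) * Real.sqrt (S i)) ≤
        Real.sqrt ba * Real.sqrt Ss := by
      rw [hSs, ← hsumH]; exact sum_sqrt_cs hHnn hSnn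
    have step1 : Ss ≤ ∑ i ∈ Finset.range n, (h * (Real.sqrt (T i) * Real.sqrt (S i)) +
        (Real.sqrt ba * Real.sqrt Ts) * (Real.sqrt (H i) * Real.sqrt (S i))) := by
      rw [hSs]; exact Finset.sum_le_sum helem
    have step2 : (∑ i ∈ Finset.range n, (h * (Real.sqrt (T i) * Real.sqrt (S i)) +
        (Real.sqrt ba * Real.sqrt Ts) * (Real.sqrt (H i) * Real.sqrt (S i))))
        = h * (∑ i ∈ Finset.range n, Real.sqrt (T i) * Real.sqrt (S i)) +
          (Real.sqrt ba * Real.sqrt Ts) *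
            (∑ i ∈ Finset.range n, Real.sqrt (H i) * Real.sqrt (S i)) := by
      rw [Finset.sum_add_distrib, Finset.mul_sum, Finset.mul_sum]
    have e1 : h * (∑ i ∈ Finset.range n, Real.sqrt (T i) * Real.sqrt (S i)) ≤
        h * (Real.sqrt Ts * Real.sqrt Ss) := mul_le_mul_of_nonneg_left c1 hh
    have e2 : (Real.sqrt ba * Real.sqrt Ts) *
        (∑ i ∈ Finset.range n, Real.sqrt (H i) * Real.sqrt (S i)) ≤
        (Real.sqrt ba * Real.sqrt Ts) * (Real.sqrt ba * Real.sqrt Ss) :=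
      mul_le_mul_of_nonneg_left c2 (mul_nonneg (Real.sqrt_nonneg _) (Real.sqrt_nonneg _))
    have e3 : (Real.sqrt ba * Real.sqrt Ts) * (Real.sqrt ba * Real.sqrt Ss)
        = ba * (Real.sqrt Ts * Real.sqrt Ss) := by
      rw [show (Real.sqrt ba * Real.sqrt Ts) * (Real.sqrt ba * Real.sqrt Ss)
          = (Real.sqrt ba * Real.sqrt ba) * (Real.sqrt Ts * Real.sqrt Ss) from by ring,
        Real.mul_self_sqrt hba]
    have e4 : (ba + h) * (Real.sqrt Ts * Real.sqrt Ss)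
        = h * (Real.sqrt Ts * Real.sqrt Ss) + ba * (Real.sqrt Ts * Real.sqrt Ss) := by ring
    linarith [step1, step2, e1, e2, e3, e4]
  rcases eq_or_lt_of_le hSsnn with h0 | h0
  · rw [← h0, Real.sqrt_zero]
    have : 0 ≤ ba + h := by linarith
    positivity
  · have hpos : 0 < Real.sqrt Ss := Real.sqrt_pos.mpr h0
    have hm : Real.sqrt Ss * Real.sqrt Ss ≤ ((ba + h) * Real.sqrt Ts) * Real.sqrt Ss := by
      rw [Real.mul_self_sqrt hSsnn]
      nlinarith [key]
    exact le_of_mul_le_mul_right hm hpos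

end WeakEmbedAux


/-- Lemma 3.2, weak embedding inequality. Let `k ≥ 0` and `r > k`.
For every partition of `(a,b)` with mesh size `h` and every `v ∈ S_h` with piecewise
discrete weak derivative `D`, the interior component satisfies
`‖v⁰‖_{L²(a,b)} ≤ ((b - a) + h) ‖d_{w,r} v‖_h`. -/

theorem weak_embedding (k r : ℕ) (hkr : k < r) (a b : ℝ) (hab : a < b)
    (N : ℕ) (x : ℕ → ℝ) (hpart : IsPartition N a b x)
    (h : ℝ) (hmesh : ∀ i < N - 1, x (i + 1) - x i ≤ h)
    (v0 : ℕ → Polynomial ℝ) (vn : ℕ → ℝ) (D : ℕ → Polynomial ℝ)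
    (hv : MemSh k N v0 vn) (hD : IsWeakDerivFam r N x v0 vn D) :
    Real.sqrt (∑ i ∈ Finset.range (N - 1), ∫ t in x i..x (i + 1), ((v0 i).eval t) ^ 2)
      ≤ ((b - a) + h) *
        Real.sqrt (∑ i ∈ Finset.range (N - 1), ∫ t in x i..x (i + 1), ((D i).eval t) ^ 2) := by
  obtain ⟨hN, hx0, hxN, hlt⟩ := hpart
  obtain ⟨hdeg, hvn0⟩ := hv
  have hn1 : 0 < N - 1 := by omega
  have hle : ∀ i, i < N - 1 → x i ≤ x (i + 1) := fun i hi => (hlt i hi).le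
  have hba : (0 : ℝ) ≤ b - a := by linarith
  have hh0 : 0 < h := lt_of_lt_of_le (sub_pos.mpr (hlt 0 hn1)) (hmesh 0 hn1)
  have hTnn : ∀ i, i < N - 1 → 0 ≤ ∫ t in x i..x (i + 1), ((D i).eval t) ^ 2 := fun i hi =>
    intervalIntegral.integral_nonneg (hle i hi) fun t _ => sq_nonneg _
  have hSnn : ∀ i, i < N - 1 → 0 ≤ ∫ t in x i..x (i + 1), ((v0 i).eval t) ^ 2 := fun i hi =>
    intervalIntegral.integral_nonneg (hle i hi) fun t _ => sq_nonneg _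
  have hsumH : (∑ i ∈ Finset.range (N - 1), (x (i + 1) - x i)) = b - a := by
    rw [Finset.sum_range_sub x (N - 1), hx0, hxN]
  have habs1 : ∀ i, i < N - 1 → |∫ t in x i..x (i + 1), (D i).eval t| ≤
      Real.sqrt (x (i + 1) - x i) *
        Real.sqrt (∫ t in x i..x (i + 1), ((D i).eval t) ^ 2) := by
    intro i hi
    have hcs := WeakEmbedAux.abs_integral_le (hle i hi) (f := fun t => (D i).eval t)
      (g := fun _ => (1 : ℝ)) (D i).continuous continuous_const
    simp only [mul_one, one_pow] at hcs
    have h1 : (∫ t in x i..x (i + 1), (1 : ℝ)) = x (i + 1) - x i := by simp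
    rw [h1, mul_comm] at hcs
    exact hcs
  have hvn : ∀ j, j ≤ N - 1 →
      vn j = ∑ i ∈ Finset.range j, ∫ t in x i..x (i + 1), (D i).eval t := by
    intro j
    induction j with
    | zero => intro _; simpa using hvn0
    | succ j ih =>
      intro hj
      have hjn : j < N - 1 := by omega
      obtain ⟨_, heq⟩ := hD j hjn
      have hdeg1 : (1 : Polynomial ℝ).degree ≤ (r : WithBot ℕ) := by
        rw [Polynomial.degree_one]
        exact_mod_cast Nat.zero_le r
      have h1 := heq 1 hdeg1
      simp only [Polynomial.eval_one, mul_one, Polynomial.derivative_one, Polynomial.eval_zero,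
        mul_zero, intervalIntegral.integral_zero, neg_zero, zero_add] at h1
      rw [Finset.sum_range_succ, ← ih (by omega)]
      linarith [h1]
  have hvb : ∀ i, i < N - 1 → |vn (i + 1)| ≤ Real.sqrt (b - a) *
      Real.sqrt (∑ j ∈ Finset.range (N - 1), ∫ t in x j..x (j + 1), ((D j).eval t) ^ 2) := by
    intro i hi
    rw [hvn (i + 1) (by omega)]
    calc |∑ j ∈ Finset.range (i + 1), ∫ t in x j..x (j + 1), (D j).eval t|
        ≤ ∑ j ∈ Finset.range (i + 1), |∫ t in x j..x (j + 1), (D j).eval t| :=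
          Finset.abs_sum_le_sum_abs _ _
      _ ≤ ∑ j ∈ Finset.range (N - 1), |∫ t in x j..x (j + 1), (D j).eval t| :=
          Finset.sum_le_sum_of_subset_of_nonneg
            (Finset.range_subset_range.mpr (by omega)) (fun j _ _ => abs_nonneg _)
      _ ≤ ∑ j ∈ Finset.range (N - 1), Real.sqrt (x (j + 1) - x j) *
            Real.sqrt (∫ t in x j..x (j + 1), ((D j).eval t) ^ 2) :=
          Finset.sum_le_sum fun j hj => habs1 j (Finset.mem_range.mp hj)
      _ ≤ Real.sqrt (∑ j ∈ Finset.range (N - 1), (x (j + 1) - x j)) *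
            Real.sqrt (∑ j ∈ Finset.range (N - 1), ∫ t in x j..x (j + 1), ((D j).eval t) ^ 2) :=
          WeakEmbedAux.sum_sqrt_cs
            (fun j hj => sub_nonneg.mpr (hle j (Finset.mem_range.mp hj)))
            (fun j hj => hTnn j (Finset.mem_range.mp hj))
      _ = _ := by rw [hsumH]
  refine WeakEmbedAux.assemble (N - 1) h (b - a)
    (fun i => ∫ t in x i..x (i + 1), ((v0 i).eval t) ^ 2)
    (fun i => ∫ t in x i..x (i + 1), ((D i).eval t) ^ 2)
    (fun i => x (i + 1) - x i) hh0.le hba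
    (fun i hi => hSnn i (Finset.mem_range.mp hi))
    (fun i hi => hTnn i (Finset.mem_range.mp hi))
    (fun i hi => sub_nonneg.mpr (hle i (Finset.mem_range.mp hi)))
    hsumH ?_
  intro i hi'
  have hi := Finset.mem_range.mp hi'
  have hest := WeakEmbedAux.elem_est hkr (hle i hi) (v0 i) (D i) (hdeg i hi)
    (vn i) (vn (i + 1))
    (Real.sqrt (b - a) *
      Real.sqrt (∑ j ∈ Finset.range (N - 1), ∫ t in x j..x (j + 1), ((D j).eval t) ^ 2))
    (hD i hi) (hvb i hi)
  refine hest.trans ?_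
  have h2 : (x (i + 1) - x i) *
      (Real.sqrt (∫ t in x i..x (i + 1), ((D i).eval t) ^ 2) *
        Real.sqrt (∫ t in x i..x (i + 1), ((v0 i).eval t) ^ 2)) ≤
      h * (Real.sqrt (∫ t in x i..x (i + 1), ((D i).eval t) ^ 2) *
        Real.sqrt (∫ t in x i..x (i + 1), ((v0 i).eval t) ^ 2)) :=
    mul_le_mul_of_nonneg_right (hmesh i hi)
      (mul_nonneg (Real.sqrt_nonneg _) (Real.sqrt_nonneg _))
  linarith [h2]
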